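/- In a catalytic flow system, every set of molecules generates an organization: for every C ⊆ M there exists an organization O obtained by first forming the closure GCL(C) and then taking its largest self-maintaining subset; in particular, for every C ⊆ M the largest self-maintaining subset of the closed set GCL(C) exists, is closed, and is therefore an organization. -/
import Mathlib


/-- A set `C` is closed: products of reactions whose reactants all lie in `C` lie in `C`. -/
def Closed {ι ρ : Type*} (re : ρ → Multiset ι × Multiset ι) (C : Set ι) : Prop :=
  ∀ r : ρ, (∀ a ∈ (re r).1, a ∈ C) → ∀ b ∈ (re r).2, b ∈ C

/-- Molecule `k` is produced within `C`. -/
def Produced {ι ρ : Type*} [DecidableEq ι] (re : ρ → Multiset ι × Multiset ι)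
    (C : Set ι) (k : ι) : Prop :=
  ∃ r : ρ, (∀ a ∈ (re r).1, a ∈ C) ∧ (re r).1.count k < (re r).2.count k

/-- Molecule `k` is used-up within `C`. -/
def UsedUp {ι ρ : Type*} [DecidableEq ι] (re : ρ → Multiset ι × Multiset ι)
    (C : Set ι) (k : ι) : Prop :=
  ∃ r : ρ, (∀ a ∈ (re r).1, a ∈ C) ∧ (re r).2.count k < (re r).1.count k

/-- `S` is self-maintaining. -/
def SelfMaintaining {ι ρ : Type*} [DecidableEq ι] (re : ρ → Multiset ι × Multiset ι)
    (S : Set ι) : Prop :=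
  ∀ k ∈ S, UsedUp re S k → Produced re S k

/-- A semi-organization is closed and self-maintaining. -/
def SemiOrganization {ι ρ : Type*} [DecidableEq ι] (re : ρ → Multiset ι × Multiset ι)
    (S : Set ι) : Prop :=
  Closed re S ∧ SelfMaintaining re S

/-- Entry of the stoichiometric matrix: products minus reactants multiplicity. -/
noncomputable def stoich {ι ρ : Type*} [DecidableEq ι] (re : ρ → Multiset ι × Multiset ι)
    (i : ι) (r : ρ) : ℝ :=
  ((re r).2.count i : ℝ) - ((re r).1.count i : ℝ)

/-- `C` is mass-maintaining. -/
def MassMaintaining {ι ρ : Type*} [DecidableEq ι] [Fintype ρ]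
    (re : ρ → Multiset ι × Multiset ι) (C : Set ι) : Prop :=
  ∃ v : ρ → ℝ,
    (∀ r : ρ, (∀ a ∈ (re r).1, a ∈ C) → 0 < v r) ∧
    (∀ r : ρ, ¬ (∀ a ∈ (re r).1, a ∈ C) → v r = 0) ∧
    (∀ i ∈ C, 0 ≤ ∑ r : ρ, stoich re i r * v r)

/-- An organization is closed and mass-maintaining. -/
def Organization {ι ρ : Type*} [DecidableEq ι] [Fintype ρ]
    (re : ρ → Multiset ι × Multiset ι) (O : Set ι) : Prop :=
  Closed re O ∧ MassMaintaining re O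

/-- The closure of `S`: the smallest closed set containing `S`. -/
def GCL {ι ρ : Type*} (re : ρ → Multiset ι × Multiset ι) (S : Set ι) : Set ι :=
  ⋂₀ {C : Set ι | Closed re C ∧ S ⊆ C}

/-- A catalytic flow system: every molecule has a dilution reaction `{k} → ∅`,
and no molecule is used-up by any other reaction. -/
def CatalyticFlow {ι ρ : Type*} [DecidableEq ι] (re : ρ → Multiset ι × Multiset ι) : Prop :=
  (∀ k : ι, ∃ r : ρ, re r = ({k}, (0 : Multiset ι))) ∧
  (∀ r : ρ, (¬ ∃ k : ι, re r = ({k}, (0 : Multiset ι))) →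
    ∀ k : ι, (re r).1.count k ≤ (re r).2.count k)

/-- A consistent reaction system with persistent molecules `P`. -/
def Consistent {ι ρ : Type*} [DecidableEq ι] (re : ρ → Multiset ι × Multiset ι)
    (P : Set ι) : Prop :=
  (∀ k : ι, k ∉ P → ∃ r : ρ, (re r).1 = {k} ∧ k ∉ (re r).2) ∧
  (∀ r : ρ, ∀ p ∈ P, (re r).1.count p ≤ (re r).2.count p)

/-- `S` is the largest self-maintaining subset of `C`. -/
def IsGSM {ι ρ : Type*} [DecidableEq ι] (re : ρ → Multiset ι × Multiset ι)
    (C S : Set ι) : Prop :=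
  S ⊆ C ∧ SelfMaintaining re S ∧ ∀ T : Set ι, T ⊆ C → SelfMaintaining re T → T ⊆ S

/-- `S` is the largest mass-maintaining subset of `C`. -/
def IsGMM {ι ρ : Type*} [DecidableEq ι] [Fintype ρ] (re : ρ → Multiset ι × Multiset ι)
    (C S : Set ι) : Prop :=
  S ⊆ C ∧ MassMaintaining re S ∧ ∀ T : Set ι, T ⊆ C → MassMaintaining re T → T ⊆ S

/-- An admissible flux function w.r.t. threshold `Φ`: nonnegative, and positive
exactly when all reactants are present (above threshold). -/
def Admissible {ι ρ : Type*} (re : ρ → Multiset ι × Multiset ι) (Φ : ℝ)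
    (v : (ι → ℝ) → ρ → ℝ) : Prop :=
  ∀ x : ι → ℝ, ∀ r : ρ, 0 ≤ v x r ∧ (0 < v x r ↔ ∀ a ∈ (re r).1, x a > Φ)

section Aux

variable {ι ρ : Type*}

/-- Inductive description of the closure of a set. -/
inductive Clo (re : ρ → Multiset ι × Multiset ι) (S : Set ι) : ι → Prop
  | base {k : ι} : k ∈ S → Clo re S k
  | step (r : ρ) (ha : ∀ a ∈ (re r).1, Clo re S a) {b : ι} (hb : b ∈ (re r).2) :
      Clo re S b

lemma clo_subset_closed (re : ρ → Multiset ι × Multiset ι) {S T : Set ι}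
    (hT : Closed re T) (hST : S ⊆ T) : ∀ k, Clo re S k → k ∈ T := by
  intro k hk
  induction hk with
  | base h => exact hST h
  | step r ha hb ih => exact hT r ih _ hb

lemma GCL_closed (re : ρ → Multiset ι × Multiset ι) (S : Set ι) :
    Closed re (GCL re S) := by
  intro r hr b hb
  rw [GCL, Set.mem_sInter]
  intro D hD
  exact hD.1 r (fun a ha => Set.mem_sInter.mp (hr a ha) D hD) b hb

lemma produced_mono [DecidableEq ι] {re : ρ → Multiset ι × Multiset ι}
    {S S' : Set ι} (hss : S ⊆ S') {k : ι} (hp : Produced re S k) :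
    Produced re S' k := by
  obtain ⟨r, h1, h2⟩ := hp
  exact ⟨r, fun a ha => hss (h1 a ha), h2⟩

lemma usedUp_of_mem [DecidableEq ι] {re : ρ → Multiset ι × Multiset ι}
    (h : CatalyticFlow re) {T : Set ι} {k : ι} (hk : k ∈ T) : UsedUp re T k := by
  obtain ⟨r, hr⟩ := h.1 k
  refine ⟨r, ?_, ?_⟩
  · intro a ha
    rw [hr] at ha
    simp only [Multiset.mem_singleton] at ha
    exact ha ▸ hk
  · rw [hr]
    simp

end Aux

/-- in a catalytic flow system, every set generates an
organization: the largest self-maintaining subset of `GCL C` exists, is closed,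
and is an organization. -/
theorem stmt17 {ι ρ : Type*} [Fintype ι] [Fintype ρ] [DecidableEq ι]
    (re : ρ → Multiset ι × Multiset ι) (h : CatalyticFlow re) (C : Set ι) :
    ∃ O : Set ι,
      (O ⊆ GCL re C ∧ SelfMaintaining re O ∧
        ∀ T : Set ι, T ⊆ GCL re C → SelfMaintaining re T → T ⊆ O) ∧
      Closed re O ∧ Organization re O := by
  classical
  set G := GCL re C with hGdef
  set O := ⋃₀ {T : Set ι | T ⊆ G ∧ SelfMaintaining re T} with hOdef
  have hOsub : O ⊆ G := by
    intro x hx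
    obtain ⟨T, ⟨hTG, _⟩, hxT⟩ := hx
    exact hTG hxT
  have hOsm : SelfMaintaining re O := by
    intro k hk _
    obtain ⟨T, ⟨hTG, hTsm⟩, hkT⟩ := hk
    refine produced_mono ?_ (hTsm k hkT (usedUp_of_mem h hkT))
    intro x hx
    exact Set.mem_sUnion.mpr ⟨T, ⟨hTG, hTsm⟩, hx⟩
  have hmax : ∀ T : Set ι, T ⊆ G → SelfMaintaining re T → T ⊆ O := by
    intro T h1 h2 x hx
    exact Set.mem_sUnion.mpr ⟨T, ⟨h1, h2⟩, hx⟩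
  -- the inductive closure of O is self-maintaining, hence equals O; so O is closed
  have hcloG : {k | Clo re O k} ⊆ G :=
    fun k hk => clo_subset_closed re (GCL_closed re C) hOsub k hk
  have key : ∀ k, Clo re O k → k ∈ O ∨ Produced re {x | Clo re O x} k := by
    intro k hk
    induction hk with
    | base hks => exact Or.inl hks
    | @step r ha b hb ih =>
      by_cases hd : ∃ j : ι, re r = ({j}, (0 : Multiset ι))
      · obtain ⟨j, hj⟩ := hd
        rw [hj] at hb
        simp at hb
      · rcases lt_or_eq_of_le (h.2 r hd b) with hlt | heq
        · exact Or.inr ⟨r, fun a haa => ha a haa, hlt⟩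
        · have hbr : b ∈ (re r).1 := by
            rw [← Multiset.count_pos, heq, Multiset.count_pos]
            exact hb
          exact ih b hbr
  have hcloSM : SelfMaintaining re {x | Clo re O x} := by
    intro k hk _
    rcases key k hk with hkO | hp
    · exact produced_mono (fun x hx => Clo.base hx)
        (hOsm k hkO (usedUp_of_mem h hkO))
    · exact hp
  have hcloO : {x | Clo re O x} ⊆ O := hmax _ hcloG hcloSM
  have hOclosed : Closed re O := by
    intro r hr b hb
    exact hcloO (Clo.step r (fun a ha => Clo.base (hr a ha)) hb)
  -- mass maintenance
  have hMM : MassMaintaining re O := by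
    set n : ℝ := (Fintype.card ρ : ℝ) with hn
    have hn0 : 0 ≤ n := Nat.cast_nonneg _
    set ε : ℝ := (n + 1)⁻¹ with hε
    have hεpos : 0 < ε := by positivity
    have hεmul : ε * (n + 1) = 1 := inv_mul_cancel₀ (by linarith)
    have hεle : n * ε ≤ 1 := by nlinarith
    set v : ρ → ℝ := fun r =>
      if (∀ a ∈ (re r).1, a ∈ O) then
        (if ∃ j : ι, re r = ({j}, (0 : Multiset ι)) then ε else 1)
      else 0 with hv
    refine ⟨v, ?_, ?_, ?_⟩
    · intro r hr
      simp only [hv, if_pos hr]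
      split
      · exact hεpos
      · norm_num
    · intro r hr
      simp only [hv, if_neg hr]
    · intro i hi
      obtain ⟨r0, hr0app, hr0prod⟩ := hOsm i hi (usedUp_of_mem h hi)
      have hnd : ¬ ∃ j : ι, re r0 = ({j}, (0 : Multiset ι)) := by
        rintro ⟨j, hj⟩
        rw [hj] at hr0prod
        simp at hr0prod
      have h1 : (1 : ℝ) ≤ stoich re i r0 * v r0 := by
        have hv0 : v r0 = 1 := by simp only [hv, if_pos hr0app, if_neg hnd]
        rw [hv0, mul_one, stoich]
        have : ((re r0).1.count i : ℝ) + 1 ≤ ((re r0).2.count i : ℝ) := by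
          exact_mod_cast hr0prod
        linarith
      have h2 : ∀ r ∈ Finset.univ.erase r0, -ε ≤ stoich re i r * v r := by
        intro r _
        by_cases happ : ∀ a ∈ (re r).1, a ∈ O
        · by_cases hdil : ∃ j : ι, re r = ({j}, (0 : Multiset ι))
          · obtain ⟨j, hj⟩ := hdil
            have hvr : v r = ε := by
              simp only [hv, if_pos happ, if_pos (⟨j, hj⟩ : ∃ j : ι, re r = ({j}, (0 : Multiset ι)))]
            rw [hvr, stoich, hj]
            by_cases hij : i = j
            · subst hij
              simp [Multiset.count_singleton]
            · simp [Multiset.count_singleton, hij]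
              positivity
          · have hvr : v r = 1 := by simp only [hv, if_pos happ, if_neg hdil]
            rw [hvr, mul_one, stoich]
            have hle : ((re r).1.count i : ℝ) ≤ ((re r).2.count i : ℝ) := by
              exact_mod_cast h.2 r hdil i
            linarith
        · have hvr : v r = 0 := by simp only [hv, if_neg happ]
          rw [hvr, mul_zero]
          linarith
      have hsum : ∑ r : ρ, stoich re i r * v r =
          stoich re i r0 * v r0 + ∑ r ∈ Finset.univ.erase r0, stoich re i r * v r :=
        (Finset.add_sum_erase Finset.univ _ (Finset.mem_univ r0)).symm
      have h3 : ((Finset.univ.erase r0).card : ℝ) * (-ε) ≤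
          ∑ r ∈ Finset.univ.erase r0, stoich re i r * v r := by
        have := Finset.card_nsmul_le_sum (Finset.univ.erase r0)
          (fun r => stoich re i r * v r) (-ε) h2
        simpa [nsmul_eq_mul] using this
      have hcard : ((Finset.univ.erase r0).card : ℝ) ≤ n := by
        rw [hn]
        exact_mod_cast Finset.card_le_univ _
      have h4 : n * (-ε) ≤ ((Finset.univ.erase r0).card : ℝ) * (-ε) := by
        apply mul_le_mul_of_nonpos_right hcard
        linarith
      rw [hsum]
      nlinarith
  exact ⟨O, ⟨hOsub, hOsm, hmax⟩, hOclosed, hOclosed, hMM⟩
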